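/- Let T be a selfadjoint operator on a Hilbert space H with spectral measure P^(T) and let h : ℝ → ℝ be Borel measurable. Then for every bounded Borel function f : ℝ → ℂ, ∫_ℝ f(λ) dP^{(h(T))}(λ) = ∫_ℝ f(h(λ)) dP^{(T)}(λ), i.e. f(h(T)) = (f ∘ h)(T). -/

import Mathlib

open MeasureTheory

open MeasureTheory Set Filter Topology

lemma key_lemma {m₁ m₂ : Measure ℝ} [IsFiniteMeasure m₁] [IsFiniteMeasure m₂]
    {ρ₁ ρ₂ : ℝ → ℂ} (hρ₁ : Integrable ρ₁ m₁) (hρ₂ : Integrable ρ₂ m₂)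
    {h : ℝ → ℝ} (hh : Measurable h)
    (hind : ∀ E : Set ℝ, MeasurableSet E →
      ∫ x, E.indicator (fun _ => (1:ℂ)) x * ρ₁ x ∂m₁
        = ∫ x, (h ⁻¹' E).indicator (fun _ => (1:ℂ)) x * ρ₂ x ∂m₂)
    {f : ℝ → ℂ} (hf : Measurable f) {C : ℝ} (hC : ∀ x, ‖f x‖ ≤ C) :
    ∫ x, f x * ρ₁ x ∂m₁ = ∫ x, f (h x) * ρ₂ x ∂m₂ := by
  -- step 1: simple functions
  have hsimp : ∀ g : SimpleFunc ℝ ℂ,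
      ∫ x, g x * ρ₁ x ∂m₁ = ∫ x, g (h x) * ρ₂ x ∂m₂ := by
    intro g
    induction g using SimpleFunc.induction with
    | const c hs =>
      rename_i s
      have hco : ∀ x, (SimpleFunc.piecewise s hs (SimpleFunc.const ℝ c)
          (SimpleFunc.const ℝ (0:ℂ))) x = c * s.indicator (fun _ => (1:ℂ)) x := by
        intro x
        by_cases hx : x ∈ s <;>
          simp [SimpleFunc.piecewise_apply, Set.indicator_apply, hx]
      have hpre : ∀ x, s.indicator (fun _ => (1:ℂ)) (h x)
          = (h ⁻¹' s).indicator (fun _ => (1:ℂ)) x := by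
        intro x
        by_cases hx : h x ∈ s <;> simp [Set.indicator_apply, hx]
      simp only [hco, mul_assoc, integral_const_mul, hpre]
      rw [hind s hs]
    | @add g₁ g₂ hdisj hg₁ hg₂ =>
      obtain ⟨C₁, hC₁⟩ := g₁.exists_forall_norm_le
      obtain ⟨C₂, hC₂⟩ := g₂.exists_forall_norm_le
      have i₁ : Integrable (fun x => g₁ x * ρ₁ x) m₁ :=
        hρ₁.bdd_mul (g₁.measurable.aestronglyMeasurable) (c := C₁) (ae_of_all _ hC₁)
      have i₂ : Integrable (fun x => g₂ x * ρ₁ x) m₁ :=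
        hρ₁.bdd_mul (g₂.measurable.aestronglyMeasurable) (c := C₂) (ae_of_all _ hC₂)
      have i₃ : Integrable (fun x => g₁ (h x) * ρ₂ x) m₂ :=
        hρ₂.bdd_mul ((g₁.measurable.comp hh).aestronglyMeasurable) (c := C₁) (ae_of_all _ fun x => hC₁ _)
      have i₄ : Integrable (fun x => g₂ (h x) * ρ₂ x) m₂ :=
        hρ₂.bdd_mul ((g₂.measurable.comp hh).aestronglyMeasurable) (c := C₂) (ae_of_all _ fun x => hC₂ _)
      have e1 : ∫ x, (g₁ + g₂) x * ρ₁ x ∂m₁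
          = (∫ x, g₁ x * ρ₁ x ∂m₁) + ∫ x, g₂ x * ρ₁ x ∂m₁ := by
        simp only [SimpleFunc.coe_add, Pi.add_apply, add_mul]
        exact integral_add i₁ i₂
      have e2 : ∫ x, (g₁ + g₂) (h x) * ρ₂ x ∂m₂
          = (∫ x, g₁ (h x) * ρ₂ x ∂m₂) + ∫ x, g₂ (h x) * ρ₂ x ∂m₂ := by
        simp only [SimpleFunc.coe_add, Pi.add_apply, add_mul]
        exact integral_add i₃ i₄
      rw [e1, e2, hg₁, hg₂]
  -- step 2: approximate f by simple functions
  set g : ℕ → SimpleFunc ℝ ℂ :=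
    fun n => SimpleFunc.approxOn f hf Set.univ 0 (Set.mem_univ 0) n with hg
  have htend : ∀ x, Tendsto (fun n => g n x) atTop (𝓝 (f x)) := fun x =>
    SimpleFunc.tendsto_approxOn hf (Set.mem_univ 0) (by simp)
  have hbd : ∀ n x, ‖g n x‖ ≤ ‖f x‖ + ‖f x‖ := fun n x =>
    SimpleFunc.norm_approxOn_zero_le hf (Set.mem_univ 0) x n
  have hb₁ : Integrable (fun x => (C + C) * ‖ρ₁ x‖) m₁ := (hρ₁.norm.const_mul _)
  have hb₂ : Integrable (fun x => (C + C) * ‖ρ₂ x‖) m₂ := (hρ₂.norm.const_mul _)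
  have t₁ : Tendsto (fun n => ∫ x, g n x * ρ₁ x ∂m₁) atTop (𝓝 (∫ x, f x * ρ₁ x ∂m₁)) := by
    refine tendsto_integral_of_dominated_convergence _
      (fun n => ((g n).stronglyMeasurable.aestronglyMeasurable.mul hρ₁.1)) hb₁ ?_ ?_
    · intro n
      filter_upwards with x
      calc ‖g n x * ρ₁ x‖ = ‖g n x‖ * ‖ρ₁ x‖ := norm_mul _ _
        _ ≤ (C + C) * ‖ρ₁ x‖ := by
            refine mul_le_mul_of_nonneg_right ?_ (norm_nonneg _)
            exact (hbd n x).trans (add_le_add (hC x) (hC x))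
    · filter_upwards with x
      exact (htend x).mul tendsto_const_nhds
  have t₂ : Tendsto (fun n => ∫ x, g n (h x) * ρ₂ x ∂m₂) atTop
      (𝓝 (∫ x, f (h x) * ρ₂ x ∂m₂)) := by
    refine tendsto_integral_of_dominated_convergence _
      (fun n => (((g n).measurable.comp hh).aestronglyMeasurable.mul hρ₂.1)) hb₂ ?_ ?_
    · intro n
      filter_upwards with x
      calc ‖g n (h x) * ρ₂ x‖ = ‖g n (h x)‖ * ‖ρ₂ x‖ := norm_mul _ _
        _ ≤ (C + C) * ‖ρ₂ x‖ := by
            refine mul_le_mul_of_nonneg_right ?_ (norm_nonneg _)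
            exact (hbd n (h x)).trans (add_le_add (hC (h x)) (hC (h x)))
    · filter_upwards with x
      exact (htend (h x)).mul tendsto_const_nhds
  have : (fun n => ∫ x, g n x * ρ₁ x ∂m₁) = fun n => ∫ x, g n (h x) * ρ₂ x ∂m₂ := by
    funext n; exact hsimp (g n)
  rw [this] at t₁
  exact tendsto_nhds_unique t₁ t₂


/-- `Calc` is the Borel functional calculus of a selfadjoint operator: for all vectors
`φ, ψ` there is a complex spectral measure `dμ_{φ,ψ} = ρ dm` (with `m` a finite positive
measure) such that `⟨φ | Calc g ψ⟩ = ∫ g dμ_{φ,ψ}` for every bounded Borel `g`. -/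
def IsBorelFunctionalCalculus {H : Type*} [NormedAddCommGroup H] [InnerProductSpace ℂ H]
    (Calc : (ℝ → ℂ) → H →L[ℂ] H) : Prop :=
  ∀ φ ψ : H, ∃ m : Measure ℝ, IsFiniteMeasure m ∧ ∃ ρ : ℝ → ℂ, Integrable ρ m ∧
    ∀ g : ℝ → ℂ, Measurable g → (∃ C, ∀ x, ‖g x‖ ≤ C) →
      (inner ℂ φ (Calc g ψ) : ℂ) = ∫ x, g x * ρ x ∂m

/-- Let `T` be a selfadjoint operator with Borel functional calculus `Calc`, `h : ℝ → ℝ`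
Borel, and let `CalcH` be the Borel functional calculus of `h(T)`, whose spectral measure
`P^{(h(T))}` is the pushforward of `P^{(T)}` under `h` (the linking condition on
indicator functions).  Then for every bounded Borel `f : ℝ → ℂ`,
`f(h(T)) = (f ∘ h)(T)`, i.e. `∫ f dP^{(h(T))} = ∫ f ∘ h dP^{(T)}`. -/
theorem stmt_10 {H : Type*} [NormedAddCommGroup H] [InnerProductSpace ℂ H]
    (Calc CalcH : (ℝ → ℂ) → H →L[ℂ] H)
    (hCalc : IsBorelFunctionalCalculus Calc)
    (hCalcH : IsBorelFunctionalCalculus CalcH)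
    (h : ℝ → ℝ) (hh : Measurable h)
    (hlink : ∀ E : Set ℝ, MeasurableSet E →
      CalcH (Set.indicator E fun _ => (1 : ℂ)) =
        Calc (Set.indicator (h ⁻¹' E) fun _ => (1 : ℂ))) :
    ∀ f : ℝ → ℂ, Measurable f → (∃ C, ∀ x, ‖f x‖ ≤ C) → CalcH f = Calc (f ∘ h) := by
  rintro f hf ⟨C, hC⟩
  ext ψ
  refine ext_inner_left ℂ fun φ => ?_
  obtain ⟨m₁, hm₁, ρ₁, hρ₁, hspec₁⟩ := hCalcH φ ψ
  obtain ⟨m₂, hm₂, ρ₂, hρ₂, hspec₂⟩ := hCalc φ ψ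
  have hindb : ∀ E : Set ℝ, ∀ x : ℝ, ‖E.indicator (fun _ => (1:ℂ)) x‖ ≤ 1 := by
    intro E x; by_cases hx : x ∈ E <;> simp [Set.indicator_apply, hx]
  rw [hspec₁ f hf ⟨C, hC⟩, hspec₂ (f ∘ h) (hf.comp hh) ⟨C, fun x => hC (h x)⟩]
  exact key_lemma hρ₁ hρ₂ hh (fun E hE => by
    rw [← hspec₁ _ (measurable_const.indicator hE) ⟨1, hindb E⟩,
      ← hspec₂ _ (measurable_const.indicator (hh hE)) ⟨1, hindb _⟩, hlink E hE])
    hf hC
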